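/- For finite J, K the ultra-discrete KdV map satisfies empty space-particle duality: F^{(J,K)} = σ ∘ F^{(J,K)} ∘ σ, where σ(x,u) = (J−x, K−u). -/
import Mathlib

theorem udKdV_empty_space_particle_duality (J K : ℝ)
    (F : ℝ × ℝ → ℝ × ℝ)
    (hF : ∀ x u : ℝ, F (x, u) =
      (u - max (x + u - J) 0 + max (x + u - K) 0,
       x - max (x + u - K) 0 + max (x + u - J) 0))
    (σ : ℝ × ℝ → ℝ × ℝ) (hσ : ∀ x u : ℝ, σ (x, u) = (J - x, K - u)) :
    F = σ ∘ F ∘ σ := by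
  funext p
  obtain ⟨x, u⟩ := p
  simp only [Function.comp_apply, hσ, hF]
  simp only [Prod.mk.injEq, max_def]
  split_ifs <;> constructor <;> linarith
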